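/- arXiv:2410.23150 — 2 statements merged into one kernel-verified Lean document; each statement's English description precedes it below -/
import Mathlib

section
/- The two-dimensional Gagliardo–Nirenberg inequality: there exists a constant a* > 0 such that for all u ∈ H^1(R^2), (∫_{R^2} |∇u|^2)(∫_{R^2} |u|^2) ≥ (a*/2) ∫_{R^2} |u|^4. -/
open MeasureTheory
open scoped ENNReal

/-- 1D sup bound: a nonnegative differentiable integrable function with integrable
derivative is bounded by the integral of |deriv|. -/
lemma one_dim_sup (g : ℝ → ℝ) (hd : Differentiable ℝ g)
    (hint : Integrable g) (hint' : Integrable (deriv g)) (x : ℝ) :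
    g x ≤ ∫ t, |deriv g t| := by
  have habs : Integrable (fun t => |deriv g t|) := hint'.abs
  refine le_of_forall_pos_le_add fun ε hε => ?_
  -- find t ≤ x with g t ≤ ε
  obtain ⟨t, htx, htε⟩ : ∃ t ≤ x, g t ≤ ε := by
    by_contra h
    push_neg at h
    have hmono : IntegrableOn (fun _ => ε) (Set.Iio x) volume := by
      refine Integrable.mono' (hint.integrableOn) aestronglyMeasurable_const ?_
      filter_upwards [self_mem_ae_restrict measurableSet_Iio] with s hs
      have := h s (le_of_lt hs)
      rw [Real.norm_eq_abs, abs_of_pos hε]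
      exact this.le
    rw [integrableOn_const_iff] at hmono
    rcases hmono with h1 | h2
    · exact absurd (by simpa using h1) hε.ne'
    · simp [Real.volume_Iio] at h2
  have hftc : ∫ s in t..x, deriv g s = g x - g t := by
    apply intervalIntegral.integral_deriv_eq_sub
    · intro y _; exact hd y
    · exact hint'.intervalIntegrable
  have h1 : ∫ s in t..x, deriv g s ≤ ∫ s, |deriv g s| := by
    rw [intervalIntegral.integral_of_le htx]
    calc ∫ s in Set.Ioc t x, deriv g s ≤ ∫ s in Set.Ioc t x, |deriv g s| := by
          apply setIntegral_mono_on hint'.integrableOn habs.integrableOn measurableSet_Ioc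
          intro s _; exact le_abs_self _
      _ ≤ ∫ s, |deriv g s| := by
          apply setIntegral_le_integral habs
          filter_upwards with s using abs_nonneg _
  have := hftc ▸ h1
  linarith

lemma sq_le_four_mul (m P Q : ℝ) (hm : 0 ≤ m) (hP : 0 ≤ P) (hQ : 0 ≤ Q)
    (h : ∀ t > (0:ℝ), m ≤ t * P + Q / t) : m ^ 2 ≤ 4 * (P * Q) := by
  rcases eq_or_lt_of_le hm with hm0 | hm0
  · rw [← hm0]; simpa using mul_nonneg hP hQ
  rcases eq_or_lt_of_le hP with hP0 | hP0
  · -- P = 0 : m ≤ Q/t for all t, contradiction with m > 0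
    exfalso
    have ht : (0:ℝ) < Q / m + 1 := by positivity
    have h1 := h _ ht
    rw [← hP0, mul_zero, zero_add] at h1
    have h2 : Q / (Q / m + 1) < m := by
      rw [div_lt_iff₀ ht]
      have : m * (Q / m) = Q := by field_simp
      nlinarith
    linarith
  · by_contra hc
    push_neg at hc
    have ht : (0:ℝ) < m / (2 * P) := by positivity
    have h1 := h _ ht
    have e1 : m / (2 * P) * P = m / 2 := by field_simp
    have e2 : Q / (m / (2 * P)) = 2 * P * Q / m := by
      field_simp
    have h3 : 2 * P * Q / m < m / 2 := by
      rw [div_lt_iff₀ hm0]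
      nlinarith
    rw [e1, e2] at h1
    linarith

noncomputable def psiE : EuclideanSpace ℝ (Fin 2) ≃ᵐ ℝ × ℝ :=
  (MeasurableEquiv.toLp 2 (Fin 2 → ℝ)).symm.trans (MeasurableEquiv.finTwoArrow)

lemma hpsiE : MeasurePreserving psiE volume volume :=
  (volume_preserving_finTwoArrow ℝ).comp (EuclideanSpace.volume_preserving_symm_measurableEquiv_toLp (Fin 2))

noncomputable def iotaL : ℝ × ℝ →L[ℝ] EuclideanSpace ℝ (Fin 2) :=
  (ContinuousLinearMap.toSpanSingleton ℝ (EuclideanSpace.single (0 : Fin 2) (1:ℝ))).coprod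
    (ContinuousLinearMap.toSpanSingleton ℝ (EuclideanSpace.single (1 : Fin 2) (1:ℝ)))

lemma psiE_symm_eq (p : ℝ × ℝ) : psiE.symm p = iotaL p := by
  ext i
  have hs : psiE.symm p = (MeasurableEquiv.toLp 2 (Fin 2 → ℝ))
      ((MeasurableEquiv.finTwoArrow).symm p) := rfl
  rw [hs]
  have hr : iotaL p = p.1 • EuclideanSpace.single (0 : Fin 2) (1:ℝ) +
      p.2 • EuclideanSpace.single (1 : Fin 2) (1:ℝ) := rfl
  rw [hr]
  fin_cases i <;>
    simp [MeasurableEquiv.finTwoArrow, MeasurableEquiv.coe_toLp,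
      EuclideanSpace.single_apply]

lemma iotaL_norm_le (p : ℝ × ℝ) : ‖iotaL p‖ ≤ 2 * ‖p‖ := by
  have h1 : ‖iotaL p‖ ≤ ‖p.1 • EuclideanSpace.single (0 : Fin 2) (1:ℝ)‖ +
      ‖p.2 • EuclideanSpace.single (1 : Fin 2) (1:ℝ)‖ := by
    simp only [iotaL, ContinuousLinearMap.coprod_apply, ContinuousLinearMap.toSpanSingleton_apply]
    exact norm_add_le _ _
  have e0 : ‖EuclideanSpace.single (0 : Fin 2) (1:ℝ)‖ = 1 := by
    rw [EuclideanSpace.norm_single]; norm_num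
  have e1 : ‖EuclideanSpace.single (1 : Fin 2) (1:ℝ)‖ = 1 := by
    rw [EuclideanSpace.norm_single]; norm_num
  rw [norm_smul, norm_smul, e0, e1] at h1
  have : ‖p.1‖ ≤ ‖p‖ := norm_fst_le p
  have : ‖p.2‖ ≤ ‖p‖ := norm_snd_le p
  simp only [mul_one] at h1
  linarith [norm_fst_le p, norm_snd_le p]

lemma core_ladyzhenskaya (f : ℝ × ℝ → ℂ) (hdiff : Differentiable ℝ f)
    (h2 : Integrable (fun p => ‖f p‖ ^ 2))
    (h4 : Integrable (fun p => ‖f p‖ ^ 4))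
    (hD2 : Integrable (fun p => ‖fderiv ℝ f p‖ ^ 2)) :
    ∫ p, ‖f p‖ ^ 4 ≤ 4 * ((∫ p, ‖fderiv ℝ f p‖ ^ 2) * (∫ p, ‖f p‖ ^ 2)) := by
  classical
  set M : ℝ × ℝ → ℝ := fun p => 2 * (‖f p‖ * ‖fderiv ℝ f p‖) with hMdef
  have hfc : Continuous f := hdiff.continuous
  have hMmeas : AEStronglyMeasurable M volume := by
    apply AEStronglyMeasurable.const_mul
    exact (hfc.aestronglyMeasurable.norm.mul
      ((measurable_fderiv ℝ f).norm.aestronglyMeasurable))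
  have hMnonneg : ∀ p, 0 ≤ M p := fun p => by positivity
  have hM : Integrable M := by
    refine (h2.add hD2).mono' hMmeas ?_
    filter_upwards with p
    rw [Real.norm_eq_abs, abs_of_nonneg (hMnonneg p)]
    simp only [hMdef, Pi.add_apply]
    nlinarith [norm_nonneg (f p), norm_nonneg (fderiv ℝ f p),
      sq_nonneg (‖f p‖ - ‖fderiv ℝ f p‖)]
  have hMp : Integrable M (volume.prod volume) := by rwa [← Measure.volume_eq_prod]
  have hGp : Integrable (fun p : ℝ × ℝ => ‖f p‖ ^ 2) (volume.prod volume) := by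
    rwa [← Measure.volume_eq_prod]
  have h4p : Integrable (fun p : ℝ × ℝ => ‖f p‖ ^ 4) (volume.prod volume) := by
    rwa [← Measure.volume_eq_prod]
  -- the two partial-integral functions
  set A : ℝ → ℝ := fun y => ∫ x, M (x, y) with hAdef
  set B : ℝ → ℝ := fun x => ∫ y, M (x, y) with hBdef
  -- a.e. slice bound in the x-direction
  have hA : ∀ᵐ y : ℝ, ∀ x : ℝ, ‖f (x, y)‖ ^ 2 ≤ A y := by
    filter_upwards [hMp.prod_left_ae, hGp.prod_left_ae] with y hMy hGy
    intro x
    set g : ℝ → ℝ := fun x => ‖f (x, y)‖ ^ 2 with hgdef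
    have hder : ∀ s : ℝ,
        HasDerivAt g (2 * (inner ℝ (f (s, y)) (fderiv ℝ f (s, y) (1, 0)) : ℝ)) s := by
      intro s
      have h1 : HasDerivAt (fun t : ℝ => (t, y)) ((1 : ℝ), (0 : ℝ)) s :=
        (hasDerivAt_id s).prodMk (hasDerivAt_const s y)
      have h2' : HasDerivAt (fun t : ℝ => f (t, y)) (fderiv ℝ f (s, y) (1, 0)) s :=
        (hdiff (s, y)).hasFDerivAt.comp_hasDerivAt s h1
      exact h2'.norm_sq
    have hgd : Differentiable ℝ g := fun s => (hder s).differentiableAt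
    have hdb : ∀ s, |deriv g s| ≤ M (s, y) := by
      intro s
      rw [(hder s).deriv]
      have h1 : |(inner ℝ (f (s, y)) (fderiv ℝ f (s, y) (1, 0)) : ℝ)| ≤
          ‖f (s, y)‖ * ‖fderiv ℝ f (s, y) (1, 0)‖ := abs_real_inner_le_norm _ _
      have h2' : ‖fderiv ℝ f (s, y) ((1 : ℝ), (0 : ℝ))‖ ≤ ‖fderiv ℝ f (s, y)‖ := by
        calc ‖fderiv ℝ f (s, y) ((1 : ℝ), (0 : ℝ))‖
            ≤ ‖fderiv ℝ f (s, y)‖ * ‖((1 : ℝ), (0 : ℝ))‖ :=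
              (fderiv ℝ f (s, y)).le_opNorm _
          _ = ‖fderiv ℝ f (s, y)‖ := by
              simp [Prod.norm_def]
      rw [abs_mul]
      simp only [hMdef]
      rw [abs_of_nonneg (by norm_num : (0:ℝ) ≤ 2)]
      have h3 : 0 ≤ ‖f (s, y)‖ := norm_nonneg _
      nlinarith [abs_nonneg (inner ℝ (f (s, y)) (fderiv ℝ f (s, y) (1, 0)) : ℝ),
        norm_nonneg (fderiv ℝ f (s, y) ((1 : ℝ), (0 : ℝ)))]
    have hdint : Integrable (deriv g) := by
      refine hMy.mono' ((measurable_deriv g).aestronglyMeasurable) ?_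
      filter_upwards with s
      rw [Real.norm_eq_abs]; exact hdb s
    refine (one_dim_sup g hgd hGy hdint x).trans ?_
    exact integral_mono hdint.abs hMy fun s => hdb s
  -- a.e. slice bound in the y-direction
  have hB : ∀ᵐ x : ℝ, ∀ y : ℝ, ‖f (x, y)‖ ^ 2 ≤ B x := by
    filter_upwards [hMp.prod_right_ae, hGp.prod_right_ae] with x hMx hGx
    intro y
    set g : ℝ → ℝ := fun y => ‖f (x, y)‖ ^ 2 with hgdef
    have hder : ∀ s : ℝ,
        HasDerivAt g (2 * (inner ℝ (f (x, s)) (fderiv ℝ f (x, s) (0, 1)) : ℝ)) s := by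
      intro s
      have h1 : HasDerivAt (fun t : ℝ => (x, t)) ((0 : ℝ), (1 : ℝ)) s :=
        (hasDerivAt_const s x).prodMk (hasDerivAt_id s)
      have h2' : HasDerivAt (fun t : ℝ => f (x, t)) (fderiv ℝ f (x, s) (0, 1)) s :=
        (hdiff (x, s)).hasFDerivAt.comp_hasDerivAt s h1
      exact h2'.norm_sq
    have hgd : Differentiable ℝ g := fun s => (hder s).differentiableAt
    have hdb : ∀ s, |deriv g s| ≤ M (x, s) := by
      intro s
      rw [(hder s).deriv]
      have h1 : |(inner ℝ (f (x, s)) (fderiv ℝ f (x, s) (0, 1)) : ℝ)| ≤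
          ‖f (x, s)‖ * ‖fderiv ℝ f (x, s) (0, 1)‖ := abs_real_inner_le_norm _ _
      have h2' : ‖fderiv ℝ f (x, s) ((0 : ℝ), (1 : ℝ))‖ ≤ ‖fderiv ℝ f (x, s)‖ := by
        calc ‖fderiv ℝ f (x, s) ((0 : ℝ), (1 : ℝ))‖
            ≤ ‖fderiv ℝ f (x, s)‖ * ‖((0 : ℝ), (1 : ℝ))‖ :=
              (fderiv ℝ f (x, s)).le_opNorm _
          _ = ‖fderiv ℝ f (x, s)‖ := by
              simp [Prod.norm_def]
      rw [abs_mul]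
      simp only [hMdef]
      rw [abs_of_nonneg (by norm_num : (0:ℝ) ≤ 2)]
      nlinarith [abs_nonneg (inner ℝ (f (x, s)) (fderiv ℝ f (x, s) (0, 1)) : ℝ),
        norm_nonneg (fderiv ℝ f (x, s) ((0 : ℝ), (1 : ℝ))), norm_nonneg (f (x, s))]
    have hdint : Integrable (deriv g) := by
      refine hMx.mono' ((measurable_deriv g).aestronglyMeasurable) ?_
      filter_upwards with s
      rw [Real.norm_eq_abs]; exact hdb s
    refine (one_dim_sup g hgd hGx hdint y).trans ?_
    exact integral_mono hdint.abs hMx fun s => hdb s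
  -- lift the slice bounds to the product
  have hA' : ∀ᵐ p : ℝ × ℝ ∂(volume.prod volume), ∀ x, ‖f (x, p.2)‖ ^ 2 ≤ A p.2 :=
    Measure.quasiMeasurePreserving_snd.tendsto_ae.eventually hA
  have hB' : ∀ᵐ p : ℝ × ℝ ∂(volume.prod volume), ∀ y, ‖f (p.1, y)‖ ^ 2 ≤ B p.1 :=
    Measure.quasiMeasurePreserving_fst.tendsto_ae.eventually hB
  have hA0 : ∀ y, 0 ≤ A y := fun y => integral_nonneg fun x => hMnonneg _
  have hB0 : ∀ x, 0 ≤ B x := fun x => integral_nonneg fun y => hMnonneg _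
  have hAB : ∀ᵐ p : ℝ × ℝ ∂(volume.prod volume), ‖f p‖ ^ 4 ≤ B p.1 * A p.2 := by
    filter_upwards [hA', hB'] with p h1 h2
    have e1 : ‖f p‖ ^ 2 ≤ A p.2 := by simpa using h1 p.1
    have e2 : ‖f p‖ ^ 2 ≤ B p.1 := by simpa using h2 p.2
    nlinarith [sq_nonneg (‖f p‖), norm_nonneg (f p), hA0 p.2, hB0 p.1]
  -- Fubini and the product bound
  have hBint : Integrable B volume := hMp.integral_prod_left
  have hAint : Integrable A volume := hMp.integral_prod_right
  have hprod : Integrable (fun p : ℝ × ℝ => B p.1 * A p.2) (volume.prod volume) :=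
    hBint.mul_prod hAint
  have step1 : ∫ p, ‖f p‖ ^ 4 ∂(volume.prod volume) ≤
      ∫ p : ℝ × ℝ, B p.1 * A p.2 ∂(volume.prod volume) :=
    integral_mono_ae h4p hprod hAB
  have step2 : ∫ p : ℝ × ℝ, B p.1 * A p.2 ∂(volume.prod volume) =
      (∫ x, B x) * ∫ y, A y := integral_prod_mul B A
  have step3 : ∫ x, B x = ∫ p, M p ∂(volume.prod volume) :=
    (integral_prod M hMp).symm
  have step4 : ∫ y, A y = ∫ p, M p ∂(volume.prod volume) :=
    (integral_prod_symm M hMp).symm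
  have hMvol : ∫ p, M p ∂(volume.prod volume) = ∫ p, M p := by
    rw [← Measure.volume_eq_prod]
  -- bound (∫ M)² ≤ 4 P Q
  set P : ℝ := ∫ p, ‖fderiv ℝ f p‖ ^ 2 with hPdef
  set Q : ℝ := ∫ p, ‖f p‖ ^ 2 with hQdef
  have hP0 : 0 ≤ P := integral_nonneg fun p => by positivity
  have hQ0 : 0 ≤ Q := integral_nonneg fun p => by positivity
  have hM0 : 0 ≤ ∫ p, M p := integral_nonneg hMnonneg
  have hMbound : ∀ t > (0:ℝ), (∫ p, M p) ≤ t * P + Q / t := by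
    intro t ht
    have htt : t * t⁻¹ = 1 := mul_inv_cancel₀ (ne_of_gt ht)
    have hpt : ∀ p : ℝ × ℝ, M p ≤ t * ‖fderiv ℝ f p‖ ^ 2 + t⁻¹ * ‖f p‖ ^ 2 := by
      intro p
      simp only [hMdef]
      have ht' : t ≠ 0 := ne_of_gt ht
      have e : t * (t⁻¹ * ‖f p‖ - ‖fderiv ℝ f p‖) ^ 2 =
          t⁻¹ * ‖f p‖ ^ 2 - 2 * (‖f p‖ * ‖fderiv ℝ f p‖) + t * ‖fderiv ℝ f p‖ ^ 2 := by
        field_simp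
        ring
      have h := mul_nonneg ht.le (sq_nonneg (t⁻¹ * ‖f p‖ - ‖fderiv ℝ f p‖))
      rw [e] at h
      linarith
    have hrhs : Integrable (fun p : ℝ × ℝ =>
        t * ‖fderiv ℝ f p‖ ^ 2 + t⁻¹ * ‖f p‖ ^ 2) :=
      (hD2.const_mul t).add (h2.const_mul t⁻¹)
    calc (∫ p, M p) ≤ ∫ p : ℝ × ℝ, (t * ‖fderiv ℝ f p‖ ^ 2 + t⁻¹ * ‖f p‖ ^ 2) :=
          integral_mono hM hrhs hpt
      _ = t * P + Q / t := by
          rw [integral_add (hD2.const_mul t) (h2.const_mul t⁻¹),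
            integral_const_mul, integral_const_mul, hPdef, hQdef]
          ring
  have hMsq : (∫ p, M p) ^ 2 ≤ 4 * (P * Q) :=
    sq_le_four_mul _ _ _ hM0 hP0 hQ0 hMbound
  have final : ∫ p, ‖f p‖ ^ 4 ∂(volume.prod volume) ≤ 4 * (P * Q) := by
    calc ∫ p, ‖f p‖ ^ 4 ∂(volume.prod volume)
        ≤ (∫ x, B x) * ∫ y, A y := step1.trans_eq step2
      _ = (∫ p, M p) ^ 2 := by rw [step3, step4, hMvol]; ring
      _ ≤ 4 * (P * Q) := hMsq
  rwa [← Measure.volume_eq_prod] at final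

/-- **Gagliardo–Nirenberg in 2D.** There is a constant `a* > 0` such
that for every `u ∈ H¹(ℝ²)`,
`(∫ |∇u|²) (∫ |u|²) ≥ (a*/2) ∫ |u|⁴`. -/
theorem gagliardo_nirenberg_two_dim :
    ∃ aStar : ℝ, 0 < aStar ∧
      ∀ u : EuclideanSpace ℝ (Fin 2) → ℂ,
        MemLp u 2 (volume : Measure (EuclideanSpace ℝ (Fin 2))) →
        Differentiable ℝ u →
        MemLp (fun x => fderiv ℝ u x) 2
          (volume : Measure (EuclideanSpace ℝ (Fin 2))) →
        MemLp u 4 (volume : Measure (EuclideanSpace ℝ (Fin 2))) →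
        (∫ x, ‖fderiv ℝ u x‖ ^ 2) * (∫ x, ‖u x‖ ^ 2) ≥
          (aStar / 2) * ∫ x, ‖u x‖ ^ 4 := by
  refine ⟨1/8, by norm_num, fun u hu2 hud hDu2 hu4 => ?_⟩
  have hemb := psiE.symm.measurableEmbedding
  have hσ : MeasurePreserving psiE.symm volume volume := hpsiE.symm
  -- integrability over E
  have hint2 : Integrable (fun x => ‖u x‖ ^ 2) volume := by
    have h := hu2.integrable_norm_rpow (by norm_num) (by norm_num)
    have e : (fun x => ‖u x‖ ^ (2 : ℝ≥0∞).toReal) = fun x => ‖u x‖ ^ (2:ℕ) := by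
      funext x
      rw [show ((2 : ℝ≥0∞)).toReal = ((2:ℕ):ℝ) by norm_num, Real.rpow_natCast]
    rwa [e] at h
  have hint4 : Integrable (fun x => ‖u x‖ ^ 4) volume := by
    have h := hu4.integrable_norm_rpow (by norm_num) (by norm_num)
    have e : (fun x => ‖u x‖ ^ (4 : ℝ≥0∞).toReal) = fun x => ‖u x‖ ^ (4:ℕ) := by
      funext x
      rw [show ((4 : ℝ≥0∞)).toReal = ((4:ℕ):ℝ) by norm_num, Real.rpow_natCast]
    rwa [e] at h
  have hintD : Integrable (fun x => ‖fderiv ℝ u x‖ ^ 2) volume := by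
    have h := hDu2.integrable_norm_rpow (by norm_num) (by norm_num)
    have e : (fun x => ‖(fun x => fderiv ℝ u x) x‖ ^ (2 : ℝ≥0∞).toReal) =
        fun x => ‖fderiv ℝ u x‖ ^ (2:ℕ) := by
      funext x
      rw [show ((2 : ℝ≥0∞)).toReal = ((2:ℕ):ℝ) by norm_num, Real.rpow_natCast]
    rwa [e] at h
  -- the transported function
  set f : ℝ × ℝ → ℂ := fun p => u (iotaL p) with hfdef
  have hfσ : ∀ p, f p = u (psiE.symm p) := fun p => by rw [hfdef, psiE_symm_eq]
  have hfd : Differentiable ℝ f := fun p =>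
    ((hud (iotaL p)).comp p iotaL.differentiableAt : DifferentiableAt ℝ f p)
  have hfderiv : ∀ p, fderiv ℝ f p = (fderiv ℝ u (iotaL p)).comp iotaL := by
    intro p
    exact ((hud (iotaL p)).hasFDerivAt.comp p iotaL.hasFDerivAt).fderiv
  have hDf_le : ∀ p, ‖fderiv ℝ f p‖ ≤ 2 * ‖fderiv ℝ u (iotaL p)‖ := by
    intro p
    rw [hfderiv p]
    refine ContinuousLinearMap.opNorm_le_bound _ (by positivity) fun q => ?_
    calc ‖(fderiv ℝ u (iotaL p)) (iotaL q)‖ ≤ ‖fderiv ℝ u (iotaL p)‖ * ‖iotaL q‖ :=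
          (fderiv ℝ u (iotaL p)).le_opNorm _
      _ ≤ ‖fderiv ℝ u (iotaL p)‖ * (2 * ‖q‖) := by
          exact mul_le_mul_of_nonneg_left (iotaL_norm_le q) (norm_nonneg _)
      _ = 2 * ‖fderiv ℝ u (iotaL p)‖ * ‖q‖ := by ring
  -- transferred integrability and integrals
  have t2 : Integrable (fun p : ℝ × ℝ => ‖f p‖ ^ 2) volume := by
    have : (fun p : ℝ × ℝ => ‖f p‖ ^ 2) = (fun x => ‖u x‖ ^ 2) ∘ psiE.symm := by
      funext p; simp [hfσ p, Function.comp]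
    rw [this, hσ.integrable_comp_emb hemb]; exact hint2
  have t4 : Integrable (fun p : ℝ × ℝ => ‖f p‖ ^ 4) volume := by
    have : (fun p : ℝ × ℝ => ‖f p‖ ^ 4) = (fun x => ‖u x‖ ^ 4) ∘ psiE.symm := by
      funext p; simp [hfσ p, Function.comp]
    rw [this, hσ.integrable_comp_emb hemb]; exact hint4
  have tDmaj : Integrable (fun p : ℝ × ℝ => 4 * ‖fderiv ℝ u (iotaL p)‖ ^ 2) volume := by
    have : (fun p : ℝ × ℝ => 4 * ‖fderiv ℝ u (iotaL p)‖ ^ 2) =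
        (fun x => 4 * ‖fderiv ℝ u x‖ ^ 2) ∘ psiE.symm := by
      funext p; rw [Function.comp_apply, psiE_symm_eq]
    rw [this, hσ.integrable_comp_emb hemb]
    exact hintD.const_mul 4
  have tD : Integrable (fun p : ℝ × ℝ => ‖fderiv ℝ f p‖ ^ 2) volume := by
    refine tDmaj.mono' ?_ ?_
    · exact ((measurable_fderiv ℝ f).norm.pow_const 2).aestronglyMeasurable
    · filter_upwards with p
      rw [Real.norm_eq_abs, abs_of_nonneg (by positivity)]
      nlinarith [hDf_le p, norm_nonneg (fderiv ℝ f p), norm_nonneg (fderiv ℝ u (iotaL p))]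
  -- integral identities
  have i4 : ∫ p : ℝ × ℝ, ‖f p‖ ^ 4 = ∫ x, ‖u x‖ ^ 4 := by
    rw [show (fun p : ℝ × ℝ => ‖f p‖ ^ 4) = fun p => ‖u (psiE.symm p)‖ ^ 4 from
      funext fun p => by rw [hfσ p]]
    exact hσ.integral_comp hemb (fun y => ‖u y‖ ^ 4)
  have i2 : ∫ p : ℝ × ℝ, ‖f p‖ ^ 2 = ∫ x, ‖u x‖ ^ 2 := by
    rw [show (fun p : ℝ × ℝ => ‖f p‖ ^ 2) = fun p => ‖u (psiE.symm p)‖ ^ 2 from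
      funext fun p => by rw [hfσ p]]
    exact hσ.integral_comp hemb (fun y => ‖u y‖ ^ 2)
  have iD : ∫ p : ℝ × ℝ, 4 * ‖fderiv ℝ u (iotaL p)‖ ^ 2 = 4 * ∫ x, ‖fderiv ℝ u x‖ ^ 2 := by
    rw [show (fun p : ℝ × ℝ => 4 * ‖fderiv ℝ u (iotaL p)‖ ^ 2) =
        fun p => 4 * ‖fderiv ℝ u (psiE.symm p)‖ ^ 2 from
      funext fun p => by rw [psiE_symm_eq]]
    rw [hσ.integral_comp hemb (fun x => 4 * ‖fderiv ℝ u x‖ ^ 2)]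
    exact integral_const_mul 4 _
  have iDle : (∫ p : ℝ × ℝ, ‖fderiv ℝ f p‖ ^ 2) ≤ 4 * ∫ x, ‖fderiv ℝ u x‖ ^ 2 := by
    rw [← iD]
    refine integral_mono tD tDmaj fun p => ?_
    nlinarith [hDf_le p, norm_nonneg (fderiv ℝ f p), norm_nonneg (fderiv ℝ u (iotaL p))]
  -- apply the core inequality
  have hcore := core_ladyzhenskaya f hfd t2 t4 tD
  rw [i4, i2] at hcore
  have hQ0 : 0 ≤ ∫ x, ‖u x‖ ^ 2 := integral_nonneg fun x => by positivity
  have hP0 : 0 ≤ ∫ x, ‖fderiv ℝ u x‖ ^ 2 := integral_nonneg fun x => by positivity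
  have hfinal : ∫ x, ‖u x‖ ^ 4 ≤
      16 * ((∫ x, ‖fderiv ℝ u x‖ ^ 2) * ∫ x, ‖u x‖ ^ 2) := by
    have hstep : 4 * ((∫ p : ℝ × ℝ, ‖fderiv ℝ f p‖ ^ 2) * ∫ x, ‖u x‖ ^ 2) ≤
        16 * ((∫ x, ‖fderiv ℝ u x‖ ^ 2) * ∫ x, ‖u x‖ ^ 2) := by
      nlinarith [mul_le_mul_of_nonneg_right iDle hQ0]
    linarith [hcore, hstep]
  rw [ge_iff_le]
  linarith [hfinal]
end

section
/- Let w ∈ L^1(R^2) with w even and ∫_{R^2} max(0, -w(x)) dx < a*, where a* is the optimal Gagliardo–Nirenberg constant (the largest constant such that ‖∇u‖_2^2‖u‖_2^2 ≥ (a*/2)‖u‖_4^4 for all u ∈ H^1(R^2)). Then w is strictly Hartree stable: inf over u ∈ H^1(R^2), u ≠ 0, of [∫∫ w(x-y)|u(x)|^2|u(y)|^2 dx dy] / [2 ‖u‖_{L^2}^2 ‖∇u‖_{L^2}^2] > -1. -/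
open MeasureTheory
open scoped ENNReal

private abbrev E2 := EuclideanSpace ℝ (Fin 2)

/-- Young-type bound for a nonnegative kernel. -/
private lemma hartree_neg_part_bound
    (wn f : E2 → ℝ) (hwn : Measurable wn) (hwnint : Integrable wn volume)
    (hwn0 : ∀ x, 0 ≤ wn x)
    (hf : Measurable f) (hf0 : ∀ x, 0 ≤ f x)
    (hf2 : Integrable (fun x => f x ^ 2) volume) :
    Integrable (fun x => ∫ y, wn (x - y) * (f x * f y)) volume ∧
      ∫ x, ∫ y, wn (x - y) * (f x * f y) ≤ (∫ x, wn x) * ∫ x, f x ^ 2 := by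
  set W : E2 → ℝ≥0∞ := fun z => ENNReal.ofReal (wn z) with hWdef
  set F : E2 → ℝ≥0∞ := fun z => ENNReal.ofReal (f z) with hFdef
  have hWm : Measurable W := hwn.ennreal_ofReal
  have hFm : Measurable F := hf.ennreal_ofReal
  have hF2m : Measurable fun x => ENNReal.ofReal (f x ^ 2) := (hf.pow_const 2).ennreal_ofReal
  set S' : ℝ≥0∞ := ∫⁻ x, ENNReal.ofReal (f x ^ 2) with hS'def
  have hS' : S' = ENNReal.ofReal (∫ x, f x ^ 2) :=
    (ofReal_integral_eq_lintegral_ofReal hf2 (ae_of_all _ fun x => sq_nonneg _)).symm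
  have hI' : ∫⁻ z, W z = ENNReal.ofReal (∫ x, wn x) :=
    (ofReal_integral_eq_lintegral_ofReal hwnint (ae_of_all _ hwn0)).symm
  -- Cauchy-Schwarz-type (AM-GM) bound for the correlation
  have hCS : ∀ z : E2, ∫⁻ x, F x * F (x - z) ≤ S' := by
    intro z
    have hmeas : Measurable fun x : E2 => F x * F (x - z) :=
      hFm.mul (hFm.comp (measurable_id.sub measurable_const))
    have hmeas2 : Measurable fun x : E2 => ENNReal.ofReal (f (x - z) ^ 2) :=
      hF2m.comp (measurable_id.sub measurable_const)
    have key : ∀ x : E2, 2 * (F x * F (x - z)) ≤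
        ENNReal.ofReal (f x ^ 2) + ENNReal.ofReal (f (x - z) ^ 2) := by
      intro x
      have h1 : (2 : ℝ≥0∞) * (F x * F (x - z)) = ENNReal.ofReal (2 * (f x * f (x - z))) := by
        rw [hFdef]; dsimp only
        rw [← ENNReal.ofReal_mul (hf0 x),
          ENNReal.ofReal_mul (by norm_num : (0:ℝ) ≤ 2), ENNReal.ofReal_ofNat]
      rw [h1, ← ENNReal.ofReal_add (sq_nonneg _) (sq_nonneg _)]
      exact ENNReal.ofReal_le_ofReal (by nlinarith [sq_nonneg (f x - f (x - z))])
    have h2 : 2 * ∫⁻ x, F x * F (x - z) ≤ 2 * S' := by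
      calc 2 * ∫⁻ x, F x * F (x - z) = ∫⁻ x, 2 * (F x * F (x - z)) :=
            (lintegral_const_mul 2 hmeas).symm
        _ ≤ ∫⁻ x, (ENNReal.ofReal (f x ^ 2) + ENNReal.ofReal (f (x - z) ^ 2)) :=
            lintegral_mono key
        _ = S' + ∫⁻ x, ENNReal.ofReal (f (x - z) ^ 2) := lintegral_add_left hF2m _
        _ = S' + S' := by
            rw [(measurePreserving_sub_right volume z).lintegral_comp hF2m]
        _ = 2 * S' := (two_mul S').symm
    exact (ENNReal.mul_le_mul_iff_right (by norm_num) (by norm_num)).1 h2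
  -- the double lintegral
  set D : ℝ≥0∞ := ∫⁻ x, ∫⁻ y, W (x - y) * (F x * F y) with hDdef
  have hsub : ∀ x : E2, (∫⁻ y, W (x - y) * (F x * F y)) = F x * ∫⁻ z, W z * F (x - z) := by
    intro x
    have hφ : Measurable fun z : E2 => W z * (F x * F (x - z)) :=
      hWm.mul (measurable_const.mul (hFm.comp (measurable_const.sub measurable_id)))
    have h1 : (∫⁻ y, W (x - y) * (F x * F y)) = ∫⁻ z, W z * (F x * F (x - z)) := by
      have := (Measure.measurePreserving_sub_left (volume : Measure E2) x).lintegral_comp hφ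
      simp only [sub_sub_cancel] at this
      exact this.symm ▸ rfl
    rw [h1]
    have hm2 : Measurable fun z : E2 => W z * F (x - z) :=
      hWm.mul (hFm.comp (measurable_const.sub measurable_id))
    calc ∫⁻ z, W z * (F x * F (x - z)) = ∫⁻ z, F x * (W z * F (x - z)) := by
          apply lintegral_congr; intro z; ring
      _ = F x * ∫⁻ z, W z * F (x - z) := lintegral_const_mul _ hm2
  have hD : D ≤ ENNReal.ofReal ((∫ x, wn x) * ∫ x, f x ^ 2) := by
    have hunc : Measurable (Function.uncurry fun x z : E2 => F x * (W z * F (x - z))) :=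
      (hFm.comp measurable_fst).mul ((hWm.comp measurable_snd).mul
        (hFm.comp (measurable_fst.sub measurable_snd)))
    calc D = ∫⁻ x, F x * ∫⁻ z, W z * F (x - z) := lintegral_congr hsub
      _ = ∫⁻ x, ∫⁻ z, F x * (W z * F (x - z)) := by
          apply lintegral_congr; intro x
          exact (lintegral_const_mul _ (hWm.mul (hFm.comp (measurable_const.sub measurable_id)))).symm
      _ = ∫⁻ z, ∫⁻ x, F x * (W z * F (x - z)) := lintegral_lintegral_swap hunc.aemeasurable
      _ = ∫⁻ z, W z * ∫⁻ x, F x * F (x - z) := by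
          apply lintegral_congr; intro z
          have hmz : Measurable fun x : E2 => F x * F (x - z) :=
            hFm.mul (hFm.comp (measurable_id.sub measurable_const))
          rw [← lintegral_const_mul (W z) hmz]
          apply lintegral_congr; intro x; ring
      _ ≤ ∫⁻ z, W z * S' := lintegral_mono fun z => mul_le_mul_right (hCS z) _
      _ = (∫⁻ z, W z) * S' := lintegral_mul_const _ hWm
      _ = ENNReal.ofReal ((∫ x, wn x) * ∫ x, f x ^ 2) := by
          rw [hI', hS', ← ENNReal.ofReal_mul (integral_nonneg hwn0)]
  have hDfin : D ≠ ⊤ := (lt_of_le_of_lt hD ENNReal.ofReal_lt_top).ne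
  -- identify the Bochner inner integral with the lintegral
  have hinner : ∀ x : E2,
      (∫ y, wn (x - y) * (f x * f y)) = (∫⁻ y, W (x - y) * (F x * F y)).toReal := by
    intro x
    have hmy : Measurable fun y : E2 => wn (x - y) * (f x * f y) :=
      (hwn.comp (measurable_const.sub measurable_id)).mul (measurable_const.mul hf)
    rw [integral_eq_lintegral_of_nonneg_ae
      (ae_of_all _ fun y => mul_nonneg (hwn0 _) (mul_nonneg (hf0 x) (hf0 y)))
      hmy.aestronglyMeasurable]
    congr 1
    apply lintegral_congr; intro y
    rw [ENNReal.ofReal_mul (hwn0 _), ENNReal.ofReal_mul (hf0 x)]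
  have huncW : Measurable (Function.uncurry fun x y : E2 => W (x - y) * (F x * F y)) :=
    (hWm.comp (measurable_fst.sub measurable_snd)).mul
      ((hFm.comp measurable_fst).mul (hFm.comp measurable_snd))
  have hLmeas : Measurable fun x : E2 => ∫⁻ y, W (x - y) * (F x * F y) :=
    Measurable.lintegral_prod_right huncW
  have hnegmeas : Measurable fun x : E2 => ∫ y, wn (x - y) * (f x * f y) := by
    simp only [hinner]; exact hLmeas.ennreal_toReal
  have hneg0 : ∀ x : E2, 0 ≤ ∫ y, wn (x - y) * (f x * f y) := fun x =>
    integral_nonneg fun y => mul_nonneg (hwn0 _) (mul_nonneg (hf0 x) (hf0 y))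
  have hkey : ∫⁻ x, ENNReal.ofReal (∫ y, wn (x - y) * (f x * f y)) ≤ D := by
    apply lintegral_mono; intro x
    show ENNReal.ofReal (∫ y, wn (x - y) * (f x * f y)) ≤ _
    rw [hinner x]
    exact ENNReal.ofReal_toReal_le
  constructor
  · refine ⟨hnegmeas.aestronglyMeasurable, ?_⟩
    rw [hasFiniteIntegral_iff_ofReal (ae_of_all _ hneg0)]
    exact lt_of_le_of_lt hkey hDfin.lt_top
  · rw [integral_eq_lintegral_of_nonneg_ae (ae_of_all _ hneg0) hnegmeas.aestronglyMeasurable]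
    calc (∫⁻ x, ENNReal.ofReal (∫ y, wn (x - y) * (f x * f y))).toReal
        ≤ (ENNReal.ofReal ((∫ x, wn x) * ∫ x, f x ^ 2)).toReal :=
          ENNReal.toReal_mono ENNReal.ofReal_ne_top (le_trans hkey hD)
      _ = (∫ x, wn x) * ∫ x, f x ^ 2 := ENNReal.toReal_ofReal
            (mul_nonneg (integral_nonneg hwn0) (integral_nonneg fun x => sq_nonneg _))

/-- Core inequality for a measurable kernel and a measurable nonnegative density. -/
private lemma hartree_core
    (w f : E2 → ℝ) (hw : Measurable w) (hwint : Integrable w volume)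
    (hf : Measurable f) (hf0 : ∀ x, 0 ≤ f x)
    (hf2 : Integrable (fun x => f x ^ 2) volume) :
    ∫ x, ∫ y, w (x - y) * (f x * f y) ≥
      -((∫ x, max 0 (-w x)) * ∫ x, f x ^ 2) := by
  set wn : E2 → ℝ := fun x => max 0 (-w x) with hwndef
  have hwnm : Measurable wn := measurable_const.max hw.neg
  have hwn0 : ∀ x, 0 ≤ wn x := fun x => le_max_left _ _
  have hwnabs : ∀ x, ‖wn x‖ ≤ ‖w x‖ := by
    intro x
    simp only [Real.norm_eq_abs]
    rw [abs_of_nonneg (hwn0 x)]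
    exact max_le (abs_nonneg _) (neg_le_abs _)
  have hwnint : Integrable wn volume :=
    hwint.mono hwnm.aestronglyMeasurable (ae_of_all _ hwnabs)
  obtain ⟨hNint, hNle⟩ := hartree_neg_part_bound wn f hwnm hwnint hwn0 hf hf0 hf2
  have hI0 : 0 ≤ ∫ x, wn x := integral_nonneg hwn0
  have hS0 : 0 ≤ ∫ x, f x ^ 2 := integral_nonneg fun x => sq_nonneg _
  have hge : ∀ x, -(∫ y, wn (x - y) * (f x * f y)) ≤ ∫ y, w (x - y) * (f x * f y) := by
    intro x
    by_cases hci : Integrable (fun y => w (x - y) * (f x * f y)) volume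
    · have hmy : Measurable fun y : E2 => wn (x - y) * (f x * f y) :=
        (hwnm.comp (measurable_const.sub measurable_id)).mul (measurable_const.mul hf)
      have hci2 : Integrable (fun y => wn (x - y) * (f x * f y)) volume := by
        refine hci.mono hmy.aestronglyMeasurable (ae_of_all _ fun y => ?_)
        simp only [Real.norm_eq_abs, abs_mul]
        exact mul_le_mul_of_nonneg_right (by simpa [Real.norm_eq_abs] using hwnabs (x - y))
          (by positivity)
      have hpt : ∀ y, -(wn (x - y) * (f x * f y)) ≤ w (x - y) * (f x * f y) := by
        intro y
        have h1 : -wn (x - y) ≤ w (x - y) := by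
          simp only [hwndef]
          have := le_max_right (0:ℝ) (-w (x - y))
          linarith
        have h2 : (0:ℝ) ≤ f x * f y := mul_nonneg (hf0 x) (hf0 y)
        calc -(wn (x - y) * (f x * f y)) = (-wn (x - y)) * (f x * f y) := (neg_mul _ _).symm
          _ ≤ w (x - y) * (f x * f y) := mul_le_mul_of_nonneg_right h1 h2
      have := integral_mono hci2.neg hci hpt
      simp only [Pi.neg_apply] at this
      rw [integral_neg] at this
      exact this
    · rw [integral_undef hci]
      have : 0 ≤ ∫ y, wn (x - y) * (f x * f y) :=
        integral_nonneg fun y => mul_nonneg (hwn0 _) (mul_nonneg (hf0 x) (hf0 y))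
      linarith
  have hfinal : ∫ x, ∫ y, w (x - y) * (f x * f y) ≥ -((∫ x, wn x) * ∫ x, f x ^ 2) := by
    by_cases hti : Integrable (fun x => ∫ y, w (x - y) * (f x * f y)) volume
    · have := integral_mono hNint.neg hti hge
      simp only [Pi.neg_apply] at this
      rw [integral_neg] at this
      have h2 : -(∫ x, ∫ y, wn (x - y) * (f x * f y)) ≥ -((∫ x, wn x) * ∫ x, f x ^ 2) :=
        neg_le_neg hNle
      linarith
    · rw [integral_undef hti]
      nlinarith
  exact hfinal


/-- Let `w ∈ L¹(ℝ²)` be even with `∫ w⁻ < a*`, where `a*` is the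
optimal Gagliardo–Nirenberg constant. Then `w` is strictly Hartree stable: there is
`ε > 0` with `∬ w(x-y)|u(x)|²|u(y)|² ≥ (-1+ε) · 2 ‖u‖₂² ‖∇u‖₂²` for all
`u ∈ H¹(ℝ²)` (this is the inequality `inf ≥ -1 + ε > -1` with the denominator
cleared). -/
theorem strict_hartree_stability_of_small_negative_part
    (aStar : ℝ) (haStar : 0 < aStar)
    (hGN : ∀ u : EuclideanSpace ℝ (Fin 2) → ℂ,
      MemLp u 2 (volume : Measure (EuclideanSpace ℝ (Fin 2))) →
      Differentiable ℝ u →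
      MemLp (fun x => fderiv ℝ u x) 2 (volume : Measure (EuclideanSpace ℝ (Fin 2))) →
      MemLp u 4 (volume : Measure (EuclideanSpace ℝ (Fin 2))) →
      (∫ x, ‖fderiv ℝ u x‖ ^ 2) * (∫ x, ‖u x‖ ^ 2) ≥ (aStar / 2) * ∫ x, ‖u x‖ ^ 4)
    (hopt : ∀ b : ℝ,
      (∀ u : EuclideanSpace ℝ (Fin 2) → ℂ,
        MemLp u 2 (volume : Measure (EuclideanSpace ℝ (Fin 2))) →
        Differentiable ℝ u →
        MemLp (fun x => fderiv ℝ u x) 2 (volume : Measure (EuclideanSpace ℝ (Fin 2))) →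
        MemLp u 4 (volume : Measure (EuclideanSpace ℝ (Fin 2))) →
        (∫ x, ‖fderiv ℝ u x‖ ^ 2) * (∫ x, ‖u x‖ ^ 2) ≥ (b / 2) * ∫ x, ‖u x‖ ^ 4) →
      b ≤ aStar)
    (w : EuclideanSpace ℝ (Fin 2) → ℝ)
    (hw1 : Integrable w (volume : Measure (EuclideanSpace ℝ (Fin 2))))
    (hweven : ∀ x, w (-x) = w x)
    (hwneg : ∫ x, max 0 (-w x) < aStar) :
    ∃ ε : ℝ, 0 < ε ∧
      ∀ u : EuclideanSpace ℝ (Fin 2) → ℂ,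
        MemLp u 2 (volume : Measure (EuclideanSpace ℝ (Fin 2))) →
        Differentiable ℝ u →
        MemLp (fun x => fderiv ℝ u x) 2 (volume : Measure (EuclideanSpace ℝ (Fin 2))) →
        MemLp u 4 (volume : Measure (EuclideanSpace ℝ (Fin 2))) →
        ∫ x, ∫ y, w (x - y) * ‖u x‖ ^ 2 * ‖u y‖ ^ 2 ≥
          (-1 + ε) * (2 * (∫ x, ‖u x‖ ^ 2) * ∫ x, ‖fderiv ℝ u x‖ ^ 2) := by
  have hwm := hw1.1
  set w' : E2 → ℝ := hwm.mk w with hw'def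
  have hw'meas : Measurable w' := hwm.measurable_mk
  have hww' : w =ᵐ[volume] w' := hwm.ae_eq_mk
  have hw'int : Integrable w' volume := hw1.congr hww'
  have hIeq : ∫ x, max 0 (-w x) = ∫ x, max 0 (-w' x) :=
    integral_congr_ae (hww'.mono fun x hx => by dsimp only; rw [hx])
  set I := ∫ x, max 0 (-w' x) with hIdef
  have hI0 : 0 ≤ I := integral_nonneg fun x => le_max_left _ _
  have hIlt : I < aStar := hIeq ▸ hwneg
  refine ⟨1 - I / aStar, by rw [sub_pos]; exact (div_lt_one haStar).2 hIlt, ?_⟩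
  intro u hu2 hud hud2 hu4
  have hum := hu2.1
  set f : E2 → ℝ := fun x => ‖hum.mk u x‖ ^ 2 with hfdef
  have huu' : u =ᵐ[volume] hum.mk u := hum.ae_eq_mk
  have hfm : Measurable f := hum.measurable_mk.norm.pow_const 2
  have hf0 : ∀ x, 0 ≤ f x := fun x => sq_nonneg _
  have hu4' : Integrable (fun x => ‖u x‖ ^ (4:ℕ)) volume := by
    have h4 := hu4.integrable_norm_rpow (by norm_num) (by norm_num)
    refine h4.congr (ae_of_all _ fun x => ?_)
    simp only [ENNReal.toReal_ofNat]
    rw [show (4:ℝ) = ((4:ℕ):ℝ) by norm_num, Real.rpow_natCast]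
  have hf2 : Integrable (fun x => f x ^ 2) volume := by
    refine hu4'.congr (huu'.mono fun x hx => ?_)
    rw [hfdef]; dsimp only; rw [← hx]; ring
  have hcore := hartree_core w' f hw'meas hw'int hfm hf0 hf2
  -- a.e. identification of the kernels
  have hqmp := MeasureTheory.quasiMeasurePreserving_sub (volume : Measure E2)
    (volume : Measure E2)
  have hprod : ∀ᵐ p : E2 × E2 ∂((volume : Measure E2).prod volume),
      w (p.1 - p.2) = w' (p.1 - p.2) := by
    have hnull : (volume : Measure E2) {t : E2 | ¬ w t = w' t} = 0 := ae_iff.1 hww'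
    exact ae_iff.2 (hqmp.preimage_null hnull)
  have haew : ∀ᵐ x : E2 ∂volume, ∀ᵐ y : E2 ∂volume, w (x - y) = w' (x - y) :=
    Measure.ae_ae_of_ae_prod hprod
  have hLHS : ∫ x, ∫ y, w (x - y) * ‖u x‖ ^ 2 * ‖u y‖ ^ 2
      = ∫ x, ∫ y, w' (x - y) * (f x * f y) := by
    apply integral_congr_ae
    filter_upwards [haew, huu'] with x hx1 hx2
    apply integral_congr_ae
    filter_upwards [hx1, huu'] with y hy1 hy2
    rw [hy1, hfdef]; dsimp only; rw [hx2, hy2]; ring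
  rw [hLHS]
  have hGNu := hGN u hu2 hud hud2 hu4
  set M := ∫ x, ‖u x‖ ^ 2 with hM
  set G := ∫ x, ‖fderiv ℝ u x‖ ^ 2 with hG
  have hM0 : 0 ≤ M := integral_nonneg fun x => by positivity
  have hG0 : 0 ≤ G := integral_nonneg fun x => by positivity
  set Su := ∫ x, ‖u x‖ ^ 4 with hSu
  have hSfu : ∫ x, f x ^ 2 = Su := by
    rw [hSu]
    apply integral_congr_ae
    filter_upwards [huu'] with x hx
    rw [hfdef]; dsimp only; rw [← hx]; ring
  have hSu0 : 0 ≤ Su := integral_nonneg fun x => by positivity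
  have hres : ∫ x, ∫ y, w' (x - y) * (f x * f y) ≥ -(I * Su) := by
    rw [hIdef, ← hSfu]
    exact hcore
  have h2MG : aStar * Su ≤ 2 * M * G := by nlinarith [hGNu]
  have h3 : (-1 + (1 - I / aStar)) * (2 * M * G) ≤ -(I * Su) := by
    have hd : 0 ≤ I / aStar := div_nonneg hI0 haStar.le
    have h4 : (I / aStar) * (aStar * Su) ≤ (I / aStar) * (2 * M * G) :=
      mul_le_mul_of_nonneg_left h2MG hd
    have h5 : (I / aStar) * (aStar * Su) = I * Su := by
      field_simp
    have h6 : (-1 + (1 - I / aStar)) * (2 * M * G) = -((I / aStar) * (2 * M * G)) := by ring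
    rw [h6]
    linarith [h4, h5]
  linarith [hres, h3]
end
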